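/- Under the following hypotheses: (i) Θ ⊆ ℝ^p is compact and L : Θ → ℝ is continuous with unique minimizer θ̂; (ii) sup_{θ∈Θ} |L_n(θ) − L(θ)| → 0 in probability; (iii) there exists θ* ∈ Θ with P(Y=c|x; θ*) = P*(Y=c|x) for all c for p_x-almost every x; (iv) for every c and every x, the map θ ↦ h^c_θ(x) is continuous on Θ; and each density p_c is strictly positive on {x : p_x(x) > 0} — the plug-in log-ratio estimator is consistent: for every pair i, j and for p_x-almost every x with p_x(x) > 0, h^i_{θ̂_n}(x) − h^j_{θ̂_n}(x) → log( p_i(x)/p_j(x) ) in probability as n → ∞, where θ̂_n minimizes L_n over Θ. -/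

import Mathlib

open MeasureTheory Topology Filter

lemma gibbs_aux {C : ℕ} (q r : Fin C → ℝ) (hq : ∀ c, 0 ≤ q c) (hr : ∀ c, 0 < r c)
    (hq1 : ∑ c, q c = 1) (hr1 : ∑ c, r c = 1) :
    ∑ c, q c * Real.log (r c) ≤ ∑ c, q c * Real.log (q c) := by
  have key : ∀ c : Fin C, q c * Real.log (r c) - q c * Real.log (q c) ≤ r c - q c := by
    intro c
    rcases eq_or_lt_of_le (hq c) with h0 | h0
    · simp [← h0]
      linarith [(hr c).le]
    · have hlog : Real.log (r c / q c) ≤ r c / q c - 1 :=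
        Real.log_le_sub_one_of_pos (div_pos (hr c) h0)
      rw [Real.log_div (hr c).ne' h0.ne'] at hlog
      have := mul_le_mul_of_nonneg_left hlog (hq c)
      rw [mul_sub, mul_sub, mul_div_cancel₀ _ h0.ne'] at this
      linarith
  have hsum := Finset.sum_le_sum (fun c (_ : c ∈ Finset.univ) => key c)
  rw [Finset.sum_sub_distrib, Finset.sum_sub_distrib, hq1, hr1] at hsum
  linarith

/-- Argmin consistency: if `g` is continuous on compact `Θ` and `θhat` is the unique
minimizer of the continuous `L` on `Θ`, and empirical losses converge uniformly in
probability, then `g (θhatn n ω) → g θhat` in probability. -/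
lemma argmin_consistency {P : ℕ} {Ω : Type*} [MeasurableSpace Ω] (μ : Measure Ω)
    (Θ : Set (Fin P → ℝ)) (hΘ : IsCompact Θ)
    (L : (Fin P → ℝ) → ℝ) (hLcont : ContinuousOn L Θ)
    (θhat : Fin P → ℝ) (hθhat : θhat ∈ Θ)
    (hmin : ∀ θ ∈ Θ, θ ≠ θhat → L θhat < L θ)
    (Ln : ℕ → Ω → (Fin P → ℝ) → ℝ)
    (hunif : ∀ ε > (0 : ℝ), Tendsto
      (fun n => μ {ω | ∃ θ ∈ Θ, ε < |Ln n ω θ - L θ|}) atTop (𝓝 0))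
    (θhatn : ℕ → Ω → Fin P → ℝ)
    (hθhatn_mem : ∀ n ω, θhatn n ω ∈ Θ)
    (hθhatn_min : ∀ n ω, ∀ θ ∈ Θ, Ln n ω (θhatn n ω) ≤ Ln n ω θ)
    (g : (Fin P → ℝ) → ℝ) (hg : ContinuousOn g Θ)
    (ε : ℝ) (hε : 0 < ε) :
    Tendsto (fun n => μ {ω | ε < |g (θhatn n ω) - g θhat|}) atTop (𝓝 0) := by
  haveI : CompactSpace Θ := isCompact_iff_compactSpace.mp hΘ
  set K : Set (Fin P → ℝ) := {θ | θ ∈ Θ ∧ ε ≤ |g θ - g θhat|} with hKdef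
  have hKsub : K ⊆ Θ := fun θ hθ => hθ.1
  have hKcompact : IsCompact K := by
    have hgr : Continuous fun θ : Θ => |g θ.1 - g θhat| :=
      ((hg.restrict).sub continuous_const).abs
    have hK' : IsCompact {θ : Θ | ε ≤ |g θ.1 - g θhat|} :=
      (isClosed_le continuous_const hgr).isCompact
    have himg : K = Subtype.val '' {θ : Θ | ε ≤ |g θ.1 - g θhat|} := by
      ext θ
      constructor
      · rintro ⟨h1, h2⟩; exact ⟨⟨θ, h1⟩, h2, rfl⟩
      · rintro ⟨⟨θ', hθ'⟩, h2, rfl⟩; exact ⟨hθ', h2⟩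
    rw [himg]
    exact hK'.image continuous_subtype_val
  obtain ⟨δ, hδpos, hδ⟩ : ∃ δ > (0 : ℝ), ∀ θ ∈ K, L θhat + δ ≤ L θ := by
    rcases K.eq_empty_or_nonempty with hK0 | hne
    · exact ⟨1, one_pos, by simp [hK0]⟩
    · obtain ⟨θ₀, hθ₀K, hθ₀min⟩ := hKcompact.exists_isMinOn hne (hLcont.mono hKsub)
      have hθ₀Θ : θ₀ ∈ Θ := hKsub hθ₀K
      have hne' : θ₀ ≠ θhat := by
        intro e
        have := hθ₀K.2
        rw [e] at this
        simp at this
        linarith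
      refine ⟨L θ₀ - L θhat, by linarith [hmin θ₀ hθ₀Θ hne'], fun θ hθ => ?_⟩
      have := isMinOn_iff.mp hθ₀min θ hθ
      linarith
  have hsub : ∀ n, {ω | ε < |g (θhatn n ω) - g θhat|} ⊆
      {ω | ∃ θ ∈ Θ, δ/3 < |Ln n ω θ - L θ|} := by
    intro n ω hω
    by_contra hcon
    simp only [Set.mem_setOf_eq] at hcon
    push_neg at hcon
    have hKmem : θhatn n ω ∈ K := ⟨hθhatn_mem n ω, le_of_lt hω⟩
    have h1 : L θhat + δ ≤ L (θhatn n ω) := hδ _ hKmem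
    have h2 : |Ln n ω (θhatn n ω) - L (θhatn n ω)| ≤ δ/3 := hcon _ (hθhatn_mem n ω)
    have h3 : |Ln n ω θhat - L θhat| ≤ δ/3 := hcon _ hθhat
    have h4 : Ln n ω (θhatn n ω) ≤ Ln n ω θhat := hθhatn_min n ω θhat hθhat
    have h2' := abs_le.mp h2
    have h3' := abs_le.mp h3
    linarith [h2'.1, h2'.2, h3'.1, h3'.2]
  exact tendsto_of_tendsto_of_tendsto_of_le_of_le tendsto_const_nhds
    (hunif (δ/3) (by linarith)) (fun n => zero_le)
    (fun n => measure_mono (hsub n))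

/-- Consistency of the plug-in log-ratio estimator: under compactness of
`Θ`, continuity and unique minimizer `θ̂` of the population loss `L`, uniform convergence
in probability of the empirical losses, realizability, continuity of `θ ↦ h θ c x` on
`Θ`, and a.e. strict positivity of each density on `{x | 0 < p_x x}`, for every pair
`i, j` and `p_x`-almost every `x` with `p_x x > 0`,
`h (θ̂ n) i x − h (θ̂ n) j x → log (p i x / p j x)` in probability. -/
theorem plug_in_log_ratio_consistency
    {d C P : ℕ} (hC : 2 ≤ C)
    {Ω : Type*} [MeasurableSpace Ω]
    (μ : Measure Ω) [IsProbabilityMeasure μ]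
    (p : Fin C → (Fin d → ℝ) → ℝ) (w : Fin C → ℝ)
    (hp_meas : ∀ c, Measurable (p c))
    (hp_nonneg : ∀ c x, 0 ≤ p c x)
    (hp_prob : ∀ c, ∫ x, p c x = 1)
    (hw_pos : ∀ c, 0 < w c) (hw_sum : ∑ c, w c = 1)
    (px : (Fin d → ℝ) → ℝ)
    (hpx : ∀ x, px x = ∑ c, w c * p c x)
    (Pstar : Fin C → (Fin d → ℝ) → ℝ)
    (hPstar : ∀ c x, Pstar c x = w c * p c x / px x)
    -- each density is strictly positive on `{x | 0 < px x}` (Lebesgue-a.e.):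
    (hp_pos : ∀ c, ∀ᵐ x, 0 < px x → 0 < p c x)
    (Θ : Set (Fin P → ℝ)) (hΘ : IsCompact Θ)
    (h : (Fin P → ℝ) → Fin C → (Fin d → ℝ) → ℝ)
    (hh_meas : ∀ θ c, Measurable (h θ c))
    -- (iv) for every `c` and `x`, `θ ↦ h θ c x` is continuous on `Θ`:
    (hh_cont : ∀ c x, ContinuousOn (fun θ => h θ c x) Θ)
    (Pm : (Fin P → ℝ) → Fin C → (Fin d → ℝ) → ℝ)
    (hPm : ∀ θ c x, Pm θ c x =
      w c * Real.exp (h θ c x) / ∑ k, w k * Real.exp (h θ k x))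
    (L : (Fin P → ℝ) → ℝ)
    (hLdef : ∀ θ, L θ = -∑ c, w c * ∫ x, p c x * Real.log (Pm θ c x))
    -- `L θ` is finite for all `θ`:
    (hLfin : ∀ θ, ∀ c, Integrable (fun x => p c x * Real.log (Pm θ c x)))
    -- the conditional entropy is finite:
    (hHfin : Integrable (fun x => px x * ∑ c, Pstar c x * Real.log (Pstar c x)))
    -- (i) `L` is continuous on `Θ` with unique minimizer `θ̂`:
    (hLcont : ContinuousOn L Θ)
    (θhat : Fin P → ℝ) (hθhat : θhat ∈ Θ)
    (hmin : ∀ θ ∈ Θ, θ ≠ θhat → L θhat < L θ)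
    -- (iii) realizability:
    (θstar : Fin P → ℝ) (hθstar : θstar ∈ Θ)
    (hreal : ∀ᵐ x ∂(volume.withDensity fun x => ENNReal.ofReal (px x)),
      ∀ c, Pm θstar c x = Pstar c x)
    -- (ii) random continuous empirical losses converging uniformly on `Θ` in probability:
    (Ln : ℕ → Ω → (Fin P → ℝ) → ℝ)
    (hLncont : ∀ n ω, ContinuousOn (Ln n ω) Θ)
    (hunif : ∀ ε > (0 : ℝ), Tendsto
      (fun n => μ {ω | ∃ θ ∈ Θ, ε < |Ln n ω θ - L θ|}) atTop (𝓝 0))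
    -- `θ̂ n` is a measurable choice of minimizer of `L n` over `Θ`:
    (θhatn : ℕ → Ω → Fin P → ℝ)
    (hθhatn_meas : ∀ n, Measurable (θhatn n))
    (hθhatn_mem : ∀ n ω, θhatn n ω ∈ Θ)
    (hθhatn_min : ∀ n ω, ∀ θ ∈ Θ, Ln n ω (θhatn n ω) ≤ Ln n ω θ) :
    ∀ i j : Fin C,
      ∀ᵐ x ∂(volume.withDensity fun x => ENNReal.ofReal (px x)),
        0 < px x →
          ∀ ε > (0 : ℝ), Tendsto
            (fun n => μ {ω | ε <
              |h (θhatn n ω) i x - h (θhatn n ω) j x - Real.log (p i x / p j x)|})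
            atTop (𝓝 0) := by
  intro i j
  have hCpos : 0 < C := by omega
  haveI : Nonempty (Fin C) := Fin.pos_iff_nonempty.mp hCpos
  have hpx_nonneg : ∀ x, 0 ≤ px x := fun x => by
    rw [hpx]
    exact Finset.sum_nonneg (fun c _ => mul_nonneg (hw_pos c).le (hp_nonneg c x))
  have hpx_meas : Measurable px := by
    have hpe : px = fun x => ∑ c, w c * p c x := funext hpx
    rw [hpe]
    exact Finset.measurable_sum _ (fun c _ => measurable_const.mul (hp_meas c))
  have hofReal_meas : Measurable fun x => ENNReal.ofReal (px x) :=
    ENNReal.measurable_ofReal.comp hpx_meas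
  have hreal' : ∀ᵐ x, 0 < px x → ∀ c, Pm θstar c x = Pstar c x := by
    have h0 := (ae_withDensity_iff hofReal_meas).mp hreal
    filter_upwards [h0] with x hx hpos
    exact hx (ENNReal.ofReal_pos.mpr hpos).ne'
  have hD : ∀ θ x, 0 < ∑ k, w k * Real.exp (h θ k x) := fun θ x =>
    Finset.sum_pos (fun k _ => mul_pos (hw_pos k) (Real.exp_pos _)) Finset.univ_nonempty
  have hPm_pos : ∀ θ c x, 0 < Pm θ c x := fun θ c x => by
    rw [hPm]
    exact div_pos (mul_pos (hw_pos c) (Real.exp_pos _)) (hD θ x)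
  have hPm_sum : ∀ θ x, ∑ c, Pm θ c x = 1 := by
    intro θ x
    simp only [hPm]
    rw [← Finset.sum_div, div_self (hD θ x).ne']
  have hzero : ∀ x, px x = 0 → ∀ c, p c x = 0 := by
    intro x h0 c
    have hs := (Finset.sum_eq_zero_iff_of_nonneg
      (fun k (_ : k ∈ Finset.univ) => mul_nonneg (hw_pos k).le (hp_nonneg k x))).mp
      (by rw [← hpx]; exact h0) c (Finset.mem_univ c)
    rcases mul_eq_zero.mp hs with hh | hh
    · exact absurd hh (hw_pos c).ne'
    · exact hh
  -- Step A: L θstar ≤ L θhat (Gibbs)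
  have hstep : L θstar ≤ L θhat := by
    have hint : ∀ θ c, Integrable (fun x => w c * (p c x * Real.log (Pm θ c x))) :=
      fun θ c => (hLfin θ c).const_mul _
    have hmono : (fun x => ∑ c, w c * (p c x * Real.log (Pm θhat c x))) ≤ᵐ[volume]
        (fun x => ∑ c, w c * (p c x * Real.log (Pm θstar c x))) := by
      filter_upwards [hreal'] with x hx
      rcases eq_or_lt_of_le (hpx_nonneg x) with h0 | h0
      · have hz := hzero x h0.symm
        simp [hz]
      · have hq_nonneg : ∀ c, 0 ≤ Pstar c x := fun c => by
          rw [hPstar]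
          exact div_nonneg (mul_nonneg (hw_pos c).le (hp_nonneg c x)) (hpx_nonneg x)
        have hq1 : ∑ c, Pstar c x = 1 := by
          simp only [hPstar]
          rw [← Finset.sum_div, ← hpx, div_self h0.ne']
        have hG := gibbs_aux (fun c => Pstar c x) (fun c => Pm θhat c x) hq_nonneg
          (fun c => hPm_pos θhat c x) hq1 (hPm_sum θhat x)
        have hwp : ∀ c, w c * p c x = px x * Pstar c x := fun c => by
          rw [hPstar]
          field_simp
        calc ∑ c, w c * (p c x * Real.log (Pm θhat c x))
            = px x * ∑ c, Pstar c x * Real.log (Pm θhat c x) := by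
              rw [Finset.mul_sum]
              refine Finset.sum_congr rfl (fun c _ => ?_)
              linear_combination Real.log (Pm θhat c x) * hwp c
          _ ≤ px x * ∑ c, Pstar c x * Real.log (Pstar c x) :=
              mul_le_mul_of_nonneg_left hG (hpx_nonneg x)
          _ = ∑ c, w c * (p c x * Real.log (Pm θstar c x)) := by
              rw [Finset.mul_sum]
              refine Finset.sum_congr rfl (fun c _ => ?_)
              rw [hx h0 c]
              linear_combination (-Real.log (Pstar c x)) * hwp c
    have hineq := integral_mono_ae
      (integrable_finset_sum _ (fun c (_ : c ∈ Finset.univ) => hint θhat c))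
      (integrable_finset_sum _ (fun c (_ : c ∈ Finset.univ) => hint θstar c)) hmono
    rw [integral_finset_sum _ (fun c _ => hint θhat c),
      integral_finset_sum _ (fun c _ => hint θstar c)] at hineq
    simp only [integral_const_mul] at hineq
    rw [hLdef θstar, hLdef θhat]
    linarith
  have hθeq : θstar = θhat := by
    by_contra hne
    exact absurd hstep (not_le.mpr (hmin θstar hθstar hne))
  subst hθeq
  -- Step B + C
  filter_upwards [hreal] with x hx hpxpos ε hε
  have hDpos := hD θstar x
  have hexp : ∀ c, Real.exp (h θstar c x) =
      p c x * ((∑ k, w k * Real.exp (h θstar k x)) / px x) := by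
    intro c
    have hE : Real.exp (h θstar c x) =
        Pm θstar c x * (∑ k, w k * Real.exp (h θstar k x)) / w c := by
      rw [hPm]
      field_simp [(hw_pos c).ne', (hD θstar x).ne']
    rw [hE, hx c, hPstar]
    field_simp [(hw_pos c).ne', hpxpos.ne']
  have hpj : 0 < p j x := by
    have hEpos := Real.exp_pos (h θstar j x)
    rw [hexp j] at hEpos
    by_contra hle
    push_neg at hle
    have hz : p j x = 0 := le_antisymm hle (hp_nonneg j x)
    rw [hz] at hEpos
    simp at hEpos
  have hgx : h θstar i x - h θstar j x = Real.log (p i x / p j x) := by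
    have hE : Real.exp (h θstar i x - h θstar j x) = p i x / p j x := by
      rw [Real.exp_sub, hexp i, hexp j,
        mul_div_mul_right _ _ (div_pos hDpos hpxpos).ne']
    rw [← hE, Real.log_exp]
  rw [← hgx]
  exact argmin_consistency μ Θ hΘ L hLcont θstar hθhat hmin Ln hunif θhatn
    hθhatn_mem hθhatn_min (fun θ => h θ i x - h θ j x)
    ((hh_cont i x).sub (hh_cont j x)) ε hε
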